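/- On ℝ⁵ with coordinates (x,y,z,a,b), let Z₁ = ∂x + a∂z, Z₂ = ∂y + b∂z, Z₃ = −3∂b, Z₄ = ∂a, and define the attacking-mode control fields Y₁ = Z₃, Y₂ = Z₄, Y₃ = 3Z₁ + Z₃, Y₄ = Z₂ + Z₄. Then: (i) each Yᵢ is annihilated by ω⁰ = dz − a dx − b dy and is null for the metric g = 2(dx da + dy db), i.e. g(Yᵢ(p), Yᵢ(p)) = 0 at every p ∈ ℝ⁵; (ii) the Lie bracket satisfies [Y₂, Y₃] = 3∂z; (iii) at every point p ∈ ℝ⁵ the five vectors Y₁(p), Y₂(p), Y₃(p), Y₄(p), ∂z(p) form a basis of ℝ⁵. In particular the family {Y₁, Y₂, Y₃, Y₄} is bracket generating at every point of ℝ⁵. -/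

import Mathlib

open Matrix

noncomputable section

/-- Points of `ℝ⁵` with coordinates `(x,y,z,a,b) = (p 0, p 1, p 2, p 3, p 4)`. -/
abbrev Pt := Fin 5 → ℝ

/-- Vector fields on `ℝ⁵`. -/
abbrev VF := Pt → Pt

/-- Lie bracket of vector fields: `[V,W](p) = (DW)_p(V(p)) − (DV)_p(W(p))`. -/
def lieBracket (V W : VF) : VF := fun p => fderiv ℝ W p (V p) - fderiv ℝ V p (W p)

/-- `Z₁ = ∂x + a∂z`. -/
def Z1 : VF := fun p => ![1, 0, p 3, 0, 0]
/-- `Z₂ = ∂y + b∂z`. -/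
def Z2 : VF := fun p => ![0, 1, p 4, 0, 0]
/-- `Z₃ = −3∂b`. -/
def Z3 : VF := fun _ => ![0, 0, 0, 0, -3]
/-- `Z₄ = ∂a`. -/
def Z4 : VF := fun _ => ![0, 0, 0, 1, 0]

/-- The attacking-mode control fields. -/
def Y1 : VF := Z3
def Y2 : VF := Z4
def Y3 : VF := fun p => (3 : ℝ) • Z1 p + Z3 p
def Y4 : VF := fun p => Z2 p + Z4 p

/-- Components of the contact form `ω⁰ = dz − a dx − b dy`. -/
def ω0 : Pt → Pt := fun p => ![-p 3, -p 4, 1, 0, 0]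

/-- The attacking-mode metric `g = 2(dx da + dy db)` evaluated on a pair of vectors. -/
def gA (v w : Fin 5 → ℝ) : ℝ := v 0 * w 3 + v 3 * w 0 + v 1 * w 4 + v 4 * w 1

lemma Y3_eq : Y3 = fun p => ![3,0,0,0,-3] + p 3 • ![0,0,3,0,0] := by
  funext p i
  fin_cases i <;> simp [Y3, Z1, Z3] <;> ring

lemma fderivY3 (p : Pt) :
    HasFDerivAt Y3 ((ContinuousLinearMap.proj 3 : Pt →L[ℝ] ℝ).smulRight ![0,0,3,0,0]) p := by
  rw [Y3_eq]
  simpa using ((ContinuousLinearMap.proj 3 : Pt →L[ℝ] ℝ).hasFDerivAt.smul_const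
    (![0,0,3,0,0] : Pt)).const_add (![3,0,0,0,-3] : Pt)

lemma bracket23 : lieBracket Y2 Y3 = (fun _ => ![0, 0, 3, 0, 0]) := by
  funext p
  have h3 := (fderivY3 p).fderiv
  have h2 : fderiv ℝ Y2 p = 0 := fderiv_const_apply _
  simp only [lieBracket, h3, h2, ContinuousLinearMap.zero_apply, sub_zero,
    ContinuousLinearMap.smulRight_apply, ContinuousLinearMap.proj_apply]
  funext i
  fin_cases i <;> simp [Y2, Y3, Z4]

/-- The attacking-mode control fields `Y₁ = Z₃`, `Y₂ = Z₄`, `Y₃ = 3Z₁+Z₃`,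
`Y₄ = Z₂+Z₄` are tangent to the contact distribution and null for `g`;
`[Y₂,Y₃] = 3∂z`; and at every point `Y₁,Y₂,Y₃,Y₄,∂z` form a basis of `ℝ⁵`:
the family `{Y₁,…,Y₄}` is bracket generating. -/
theorem attacking_mode_bracket_generating :
    (∀ p : Pt, ω0 p ⬝ᵥ Y1 p = 0 ∧ ω0 p ⬝ᵥ Y2 p = 0 ∧ ω0 p ⬝ᵥ Y3 p = 0 ∧ ω0 p ⬝ᵥ Y4 p = 0) ∧
    (∀ p : Pt, gA (Y1 p) (Y1 p) = 0 ∧ gA (Y2 p) (Y2 p) = 0 ∧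
      gA (Y3 p) (Y3 p) = 0 ∧ gA (Y4 p) (Y4 p) = 0) ∧
    lieBracket Y2 Y3 = (fun _ => ![0, 0, 3, 0, 0]) ∧
    (∀ p : Pt,
      LinearIndependent ℝ ![Y1 p, Y2 p, Y3 p, Y4 p, ![0, 0, 1, 0, 0]] ∧
      Submodule.span ℝ
        ({Y1 p, Y2 p, Y3 p, Y4 p, ![0, 0, 1, 0, 0]} : Set (Fin 5 → ℝ)) = ⊤) := by
  refine ⟨?_, ?_, bracket23, ?_⟩
  · intro p
    refine ⟨?_, ?_, ?_, ?_⟩ <;>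
      simp [ω0, Y1, Y2, Y3, Y4, Z1, Z2, Z3, Z4, dotProduct, Fin.sum_univ_five] <;> ring
  · intro p
    refine ⟨?_, ?_, ?_, ?_⟩ <;> simp [gA, Y1, Y2, Y3, Y4, Z1, Z2, Z3, Z4] <;> ring
  · intro p
    have hli : LinearIndependent ℝ ![Y1 p, Y2 p, Y3 p, Y4 p, ![0, 0, 1, 0, 0]] := by
      rw [show (![Y1 p, Y2 p, Y3 p, Y4 p, ![0, 0, 1, 0, 0]]) =
        (Matrix.row (Matrix.of ![Y1 p, Y2 p, Y3 p, Y4 p, ![0, 0, 1, 0, 0]] : Matrix (Fin 5) (Fin 5) ℝ)) from rfl]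
      rw [Matrix.linearIndependent_rows_iff_isUnit, Matrix.isUnit_iff_isUnit_det]
      have : (Matrix.of ![Y1 p, Y2 p, Y3 p, Y4 p, ![0, 0, 1, 0, 0]] : Matrix (Fin 5) (Fin 5) ℝ).det = 9 := by
        simp [Y1, Y2, Y3, Y4, Z1, Z2, Z3, Z4, Matrix.det_succ_row_zero, Fin.sum_univ_succ]
        simp [Fin.succAbove, Fin.lt_def]
        ring
      rw [this]; norm_num
    refine ⟨hli, ?_⟩
    have hrange : ({Y1 p, Y2 p, Y3 p, Y4 p, ![0, 0, 1, 0, 0]} : Set (Fin 5 → ℝ)) =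
        Set.range ![Y1 p, Y2 p, Y3 p, Y4 p, ![0, 0, 1, 0, 0]] := by
      simp only [Matrix.range_cons, Matrix.range_empty, Set.union_empty,
        Set.singleton_union]
    rw [hrange]
    exact hli.span_eq_top_of_card_eq_finrank (by simp)
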